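/- Let G be a finite connected simple graph, Γ a cycle of G of length 4, and H the induced subgraph of G on the vertex set of Γ. If F ⊆ I_G is a set of G-homogeneous polynomials which generates I_G up to radical (i.e., rad of the ideal generated by F equals I_G), then F ∩ K[x_i : e_i ∈ E(H)] generates the toric ideal I_H up to radical in the polynomial ring K[x_i : e_i ∈ E(H)]. -/

import Mathlib

open MvPolynomial

noncomputable section

/-- The exponent of the variable `t j` in the image of `x i`: it is `1` if the vertex `j`
is an endpoint of the edge `e i`, and `0` otherwise (incidence vector of the edge `e i`). -/
def incid {n m : ℕ} (e : Fin m → Sym2 (Fin n)) (i : Fin m) (j : Fin n) : ℕ :=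
  if j ∈ e i then 1 else 0

/-- The `K`-algebra homomorphism `K[x_1,…,x_m] → K[t_1,…,t_n]` sending `x i` to
`t_j t_k`, where `e i = {v_j, v_k}`. -/
def toricMap (K : Type*) [CommRing K] {n m : ℕ} (e : Fin m → Sym2 (Fin n)) :
    MvPolynomial (Fin m) K →ₐ[K] MvPolynomial (Fin n) K :=
  aeval fun i => ∏ j, X j ^ incid e i j

/-- The toric ideal `I_G` of the graph with edges `e`. -/
def toricIdeal (K : Type*) [CommRing K] {n m : ℕ} (e : Fin m → Sym2 (Fin n)) :
    Ideal (MvPolynomial (Fin m) K) :=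
  RingHom.ker (toricMap K e)

/-- The toric map of the subgraph of `G` consisting of the edges `e l` with `P l`. -/
def subToricMap (K : Type*) [CommRing K] {n m : ℕ} (e : Fin m → Sym2 (Fin n))
    (P : Fin m → Prop) : MvPolynomial {l : Fin m // P l} K →ₐ[K] MvPolynomial (Fin n) K :=
  aeval fun l => ∏ j, X j ^ incid e l.1 j

/-- The toric ideal `I_H ⊆ K[x_l : e_l ∈ E(H)]` of the subgraph of `G` consisting of the
edges `e l` with `P l`. -/
def subToricIdeal (K : Type*) [CommRing K] {n m : ℕ} (e : Fin m → Sym2 (Fin n))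
    (P : Fin m → Prop) : Ideal (MvPolynomial {l : Fin m // P l} K) :=
  RingHom.ker (subToricMap K e P)

/-- The `G`-degree of an exponent vector `u`: `deg_G(x^u) = u_1 a_1 + ⋯ + u_m a_m ∈ ℤ^n`. -/
def degG {n m : ℕ} (e : Fin m → Sym2 (Fin n)) (u : Fin m →₀ ℕ) : Fin n → ℤ :=
  fun j => ∑ i, (u i : ℤ) * (incid e i j : ℤ)

/-- A polynomial is `G`-homogeneous if all monomials appearing in it have the same
`G`-degree. -/
def IsGHomogeneous {K : Type*} [CommRing K] {n m : ℕ} (e : Fin m → Sym2 (Fin n))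
    (p : MvPolynomial (Fin m) K) : Prop :=
  ∀ u ∈ p.support, ∀ v ∈ p.support, degG e u = degG e v

/-- Let `Γ` be a 4-cycle of `G` and `H` the induced subgraph of `G` on
the vertex set of `Γ`.  If `F ⊆ I_G` is a set of `G`-homogeneous polynomials generating
`I_G` up to radical, then `F ∩ K[x_l : e_l ∈ E(H)]` generates `I_H` up to radical in the
polynomial ring `K[x_l : e_l ∈ E(H)]`. -/
theorem subToricIdeal_radical_generation {K : Type*} [Field K] [IsAlgClosed K]
    {n m : ℕ} (e : Fin m → Sym2 (Fin n))
    (he : Function.Injective e) (hl : ∀ i, ¬ (e i).IsDiag)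
    (hconn : (SimpleGraph.fromEdgeSet (Set.range e)).Connected)
    (v₁ v₂ v₃ v₄ : Fin n) (hv : v₁ ≠ v₂ ∧ v₁ ≠ v₃ ∧ v₁ ≠ v₄ ∧ v₂ ≠ v₃ ∧ v₂ ≠ v₄ ∧ v₃ ≠ v₄)
    (i p j q : Fin m)
    (hΓ : e i = s(v₁, v₂) ∧ e p = s(v₂, v₃) ∧ e j = s(v₃, v₄) ∧ e q = s(v₄, v₁))
    (W : Set (Fin n)) (hW : W = {v₁, v₂, v₃, v₄})
    (P : Fin m → Prop) (hP : ∀ l, P l ↔ ∀ v ∈ e l, v ∈ W)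
    (F : Set (MvPolynomial (Fin m) K))
    (hFmem : ∀ f ∈ F, f ∈ toricIdeal K e)
    (hFhom : ∀ f ∈ F, IsGHomogeneous e f)
    (hFrad : (Ideal.span F).radical = toricIdeal K e) :
    (Ideal.span {g : MvPolynomial {l : Fin m // P l} K |
        rename (Subtype.val : {l : Fin m // P l} → Fin m) g ∈ F}).radical =
      subToricIdeal K e P := by
  classical
  obtain ⟨_, _, _, _, _, _⟩ := hv  -- unused
  have hinj : Function.Injective (Subtype.val : {l : Fin m // P l} → Fin m) :=
    Subtype.val_injective
  set φ : MvPolynomial (Fin m) K →ₐ[K] MvPolynomial {l : Fin m // P l} K :=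
    killCompl hinj with hφ
  set S : Set (MvPolynomial {l : Fin m // P l} K) :=
    {g | rename (Subtype.val : {l : Fin m // P l} → Fin m) g ∈ F} with hS
  -- subToricMap is toricMap composed with rename
  have hcomm : ∀ g : MvPolynomial {l : Fin m // P l} K,
      subToricMap K e P g = toricMap K e (rename (Subtype.val) g) := by
    intro g
    rw [toricMap, aeval_rename]
    rfl
  -- the subtoric ideal is prime
  have hprime : (subToricIdeal K e P).IsPrime := RingHom.ker_isPrime _
  -- φ kills monomials using a variable outside P
  have hkill : ∀ (u : Fin m →₀ ℕ) (c : K), (∃ l ∈ u.support, ¬ P l) →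
      φ (monomial u c) = 0 := by
    rintro u c ⟨l, hlu, hlP⟩
    rw [hφ, killCompl, aeval_monomial, Finsupp.prod]
    refine mul_eq_zero_of_right _ (Finset.prod_eq_zero hlu ?_)
    have hnot : l ∉ Set.range (Subtype.val : {l : Fin m // P l} → Fin m) := by
      rw [Subtype.range_val_subtype]; exact hlP
    simp only [dif_neg hnot]
    exact zero_pow (Finsupp.mem_support_iff.mp hlu)
  -- φ composed with rename is the identity on P-supported monomials
  have hsect : ∀ (u : Fin m →₀ ℕ) (c : K), (∀ l ∈ u.support, P l) →
      rename (Subtype.val : {l : Fin m // P l} → Fin m) (φ (monomial u c)) = monomial u c := by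
    intro u c hu
    rw [hφ, killCompl, aeval_monomial, map_mul, monomial_eq]
    congr 1
    · simp [algebraMap_eq]
    · rw [Finsupp.prod, Finsupp.prod, map_prod]
      refine Finset.prod_congr rfl fun l hl => ?_
      have h : l ∈ Set.range (Subtype.val : {l : Fin m // P l} → Fin m) := by
        rw [Subtype.range_val_subtype]; exact hu l hl
      simp only [dif_pos h, map_pow, rename_X]
      congr 1
      · exact congrArg X (Equiv.apply_ofInjective_symm hinj ⟨l, h⟩)
  -- key homogeneity fact: if a G-homogeneous f has a monomial using a variable outside P,
  -- then every monomial of f uses a variable outside P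
  have hhom : ∀ f ∈ F, ∀ u ∈ f.support, (∃ l ∈ u.support, ¬ P l) →
      ∀ v ∈ f.support, ∃ l ∈ v.support, ¬ P l := by
    rintro f hf u hu ⟨l, hlu, hlP⟩ v hv
    by_contra hvP
    push_neg at hvP
    -- get a vertex of e l outside W
    rw [hP] at hlP
    push_neg at hlP
    obtain ⟨j₀, hj₀e, hj₀W⟩ := hlP
    have hdeg := hFhom f hf u hu v hv
    have hdv : degG e v j₀ = 0 := by
      unfold degG
      refine Finset.sum_eq_zero fun i' _ => ?_
      rcases eq_or_ne (v i') 0 with h | h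
      · simp [h]
      · have hPi' : P i' := hvP i' (Finsupp.mem_support_iff.mpr h)
        have : j₀ ∉ e i' := fun hj => hj₀W ((hP i').mp hPi' j₀ hj)
        simp [incid, this]
    have hdu : 0 < degG e u j₀ := by
      unfold degG
      refine Finset.sum_pos' (fun i' _ => ?_) ⟨l, Finset.mem_univ l, ?_⟩
      · positivity
      · have h1 : incid e l j₀ = 1 := by simp [incid, hj₀e]
        have h2 : u l ≠ 0 := Finsupp.mem_support_iff.mp hlu
        rw [h1]
        simpa using Nat.pos_of_ne_zero h2
    rw [hdeg, hdv] at hdu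
    exact lt_irrefl 0 hdu
  -- φ maps elements of F into span S
  have hmapF : ∀ f ∈ F, φ f ∈ Ideal.span S := by
    intro f hf
    by_cases hcase : ∃ u ∈ f.support, ∃ l ∈ u.support, ¬ P l
    · -- every monomial dies
      obtain ⟨u, hu, hul⟩ := hcase
      have : φ f = 0 := by
        conv_lhs => rw [f.as_sum]
        rw [map_sum]
        refine Finset.sum_eq_zero fun v hv => hkill v _ (hhom f hf u hu hul v hv)
      rw [this]; exact Ideal.zero_mem _
    · -- f is supported on P-variables, hence rename (φ f) = f
      push_neg at hcase
      have hfeq : rename (Subtype.val : {l : Fin m // P l} → Fin m) (φ f) = f := by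
        conv_lhs => rw [f.as_sum]
        conv_rhs => rw [f.as_sum]
        rw [map_sum, map_sum]
        exact Finset.sum_congr rfl fun u hu => hsect u _ (fun l hl => hcase u hu l hl)
      refine Ideal.subset_span ?_
      rw [hS, Set.mem_setOf_eq, hfeq]
      exact hf
  -- φ maps span F into span S
  have hmap : ∀ x ∈ Ideal.span F, φ x ∈ Ideal.span S := by
    intro x hx
    refine Submodule.span_induction (p := fun x _ => φ x ∈ Ideal.span S)
      hmapF ?_ ?_ ?_ hx
    · simp only [map_zero]; exact Ideal.zero_mem _
    · intro a b _ _ ha hb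
      rw [map_add]; exact Ideal.add_mem _ ha hb
    · intro r a _ ha
      rw [smul_eq_mul, map_mul]
      exact Ideal.mul_mem_left _ _ ha
  apply le_antisymm
  · -- radical span S ≤ I_H, since I_H is prime (radical) and S ⊆ I_H
    rw [← hprime.radical]
    refine Ideal.radical_mono (Ideal.span_le.mpr fun g hg => ?_)
    have := hFmem _ hg
    rw [toricIdeal, RingHom.mem_ker] at this
    rw [SetLike.mem_coe, subToricIdeal, RingHom.mem_ker, hcomm, this]
  · -- I_H ≤ radical span S
    intro g hg
    rw [subToricIdeal, RingHom.mem_ker, hcomm] at hg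
    have : rename (Subtype.val : {l : Fin m // P l} → Fin m) g ∈ toricIdeal K e := hg
    rw [← hFrad, Ideal.mem_radical_iff] at this
    obtain ⟨k, hk⟩ := this
    refine Ideal.mem_radical_iff.mpr ⟨k, ?_⟩
    have := hmap _ hk
    rwa [map_pow, hφ, killCompl_rename_app] at this
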